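/- Let f : [0,∞) → ℝ be continuous (with arbitrary value at 0). Then for every 0 < δ ≤ T, sup_{t ∈ [δ,T]} |γ ∫_0^t e^{−γ(t−s)} f(s) ds − f(t)| → 0 as γ → ∞. -/

import Mathlib

open Real MeasureTheory Filter intervalIntegral

lemma exp_int (γ t a b : ℝ) (hγ : γ ≠ 0) :
    ∫ s in a..b, Real.exp (-(γ * (t - s)))
      = (Real.exp (-(γ * (t - b))) - Real.exp (-(γ * (t - a)))) / γ := by
  have h : ∀ s ∈ Set.uIcc a b, HasDerivAt (fun s => Real.exp (-(γ * (t - s))) / γ)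
      (Real.exp (-(γ * (t - s)))) s := by
    intro s _
    have h0 : HasDerivAt (fun s : ℝ => γ * s - γ * t) (γ * 1) s :=
      ((hasDerivAt_id s).const_mul γ).sub_const (γ * t)
    have heq : (fun s : ℝ => γ * s - γ * t) = fun s : ℝ => -(γ * (t - s)) := by
      funext s; ring
    rw [heq] at h0
    have h1 : HasDerivAt (fun s : ℝ => -(γ * (t - s))) γ s := by simpa using h0
    have h2 := h1.exp.div_const γ
    rw [mul_div_cancel_right₀ _ hγ] at h2
    exact h2
  have hcont : IntervalIntegrable (fun s => Real.exp (-(γ * (t - s)))) volume a b :=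
    Continuous.intervalIntegrable (by continuity) a b
  rw [intervalIntegral.integral_eq_sub_of_hasDerivAt h hcont]
  ring

set_option maxHeartbeats 1000000

/-- Let `f : [0,∞) → ℝ` be continuous (with arbitrary value at `0`). Then for
every `0 < δ ≤ T`, `sup_{t ∈ [δ,T]} |γ ∫_0^t e^{−γ(t−s)} f(s) ds − f(t)| → 0` as `γ → ∞`,
i.e. the smoothed processes converge to `f` uniformly on `[δ,T]`. -/
theorem integratedOU_tendstoUniformlyOn_away_from_zero
    (f : ℝ → ℝ) (hf : ContinuousOn f (Set.Ici 0)) :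
    ∀ δ T : ℝ, 0 < δ → δ ≤ T →
      TendstoUniformlyOn
        (fun (γ : ℝ) (t : ℝ) => γ * ∫ s in (0 : ℝ)..t, Real.exp (-(γ * (t - s))) * f s)
        f Filter.atTop (Set.Icc δ T) := by
  intro δ T hδ hδT
  have hT : (0:ℝ) < T := hδ.trans_le hδT
  have hsub : Set.Icc (0:ℝ) T ⊆ Set.Ici 0 := fun x hx => hx.1
  have hfT : ContinuousOn f (Set.Icc 0 T) := hf.mono hsub
  obtain ⟨M, hM⟩ := (isCompact_Icc).exists_bound_of_continuousOn hfT
  have hM' : ∀ x ∈ Set.Icc (0:ℝ) T, |f x| ≤ M := fun x hx => by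
    simpa using hM x hx
  have hM0 : 0 ≤ M := le_trans (abs_nonneg _) (hM' 0 ⟨le_refl 0, hT.le⟩)
  have hUC : UniformContinuousOn f (Set.Icc 0 T) :=
    (isCompact_Icc).uniformContinuousOn_of_continuous hfT
  rw [Metric.tendstoUniformlyOn_iff]
  intro ε hε
  obtain ⟨η, hηpos, hηε⟩ := Metric.uniformContinuousOn_iff.mp hUC (ε/4) (by positivity)
  set η' := min (η/2) δ with hη'def
  have hη'pos : 0 < η' := lt_min (by positivity) hδ
  have hη'δ : η' ≤ δ := min_le_right _ _
  have hη'η : η' < η := lt_of_le_of_lt (min_le_left _ _) (by linarith)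
  have hlim : ∀ c : ℝ, 0 < c → Tendsto (fun γ : ℝ => Real.exp (-(γ * c))) atTop (nhds 0) := by
    intro c hc
    have h1 : Tendsto (fun γ : ℝ => γ * c) atTop atTop :=
      Tendsto.atTop_mul_const hc tendsto_id
    have h2 := Real.tendsto_exp_neg_atTop_nhds_zero.comp h1
    simpa [Function.comp_def] using h2
  have h1 : ∀ᶠ γ in atTop, 2 * M * Real.exp (-(γ * η')) < ε/4 := by
    have := (hlim η' hη'pos).const_mul (2 * M)
    rw [mul_zero] at this
    exact this.eventually (gt_mem_nhds (by positivity))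
  have h2 : ∀ᶠ γ in atTop, M * Real.exp (-(γ * δ)) < ε/4 := by
    have := (hlim δ hδ).const_mul M
    rw [mul_zero] at this
    exact this.eventually (gt_mem_nhds (by positivity))
  filter_upwards [h1, h2, eventually_gt_atTop (0:ℝ)] with γ hg1 hg2 hγpos
  intro t ht
  have hγne : γ ≠ 0 := ne_of_gt hγpos
  have hδt : δ ≤ t := ht.1
  have htT : t ≤ T := ht.2
  have ht0 : 0 < t := lt_of_lt_of_le hδ hδt
  set a := t - η' with ha_def
  have ha0 : 0 ≤ a := by simp only [ha_def]; linarith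
  have hat : a ≤ t := by simp only [ha_def]; linarith
  -- continuity / integrability
  have hfc : ContinuousOn f (Set.Icc 0 t) := hfT.mono (Set.Icc_subset_Icc le_rfl htT)
  have hEc : Continuous (fun s : ℝ => Real.exp (-(γ * (t - s)))) := by continuity
  have hEpos : ∀ s : ℝ, 0 < Real.exp (-(γ * (t - s))) := fun s => Real.exp_pos _
  have hi1 : IntervalIntegrable (fun s => Real.exp (-(γ * (t - s))) * f s) volume 0 t := by
    apply ContinuousOn.intervalIntegrable
    rw [Set.uIcc_of_le ht0.le]
    exact hEc.continuousOn.mul hfc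
  have habs : ContinuousOn (fun s => Real.exp (-(γ * (t - s))) * |f s - f t|) (Set.Icc 0 t) :=
    hEc.continuousOn.mul ((hfc.sub continuousOn_const).abs)
  have hi3a : IntervalIntegrable (fun s => Real.exp (-(γ * (t - s))) * |f s - f t|) volume 0 a := by
    apply ContinuousOn.intervalIntegrable
    rw [Set.uIcc_of_le ha0]
    exact habs.mono (Set.Icc_subset_Icc le_rfl hat)
  have hi3b : IntervalIntegrable (fun s => Real.exp (-(γ * (t - s))) * |f s - f t|) volume a t := by
    apply ContinuousOn.intervalIntegrable
    rw [Set.uIcc_of_le hat]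
    exact habs.mono (Set.Icc_subset_Icc ha0 le_rfl)
  have hi3 : IntervalIntegrable (fun s => Real.exp (-(γ * (t - s))) * |f s - f t|) volume 0 t :=
    hi3a.trans hi3b
  have hi2 : IntervalIntegrable (fun s => Real.exp (-(γ * (t - s))) * f t) volume 0 t :=
    Continuous.intervalIntegrable (hEc.mul continuous_const) 0 t
  have hiE : ∀ u v : ℝ, IntervalIntegrable (fun s => Real.exp (-(γ * (t - s)))) volume u v :=
    fun u v => Continuous.intervalIntegrable hEc u v
  -- value of ∫ E
  have hC : γ * ∫ s in (0:ℝ)..t, Real.exp (-(γ * (t - s))) = 1 - Real.exp (-(γ * t)) := by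
    rw [exp_int γ t 0 t hγne]
    field_simp
    simp
  -- decomposition
  have hJ : (∫ s in (0:ℝ)..t, Real.exp (-(γ * (t - s))) * (f s - f t))
      = (∫ s in (0:ℝ)..t, Real.exp (-(γ * (t - s))) * f s)
        - f t * ∫ s in (0:ℝ)..t, Real.exp (-(γ * (t - s))) := by
    have : (fun s => Real.exp (-(γ * (t - s))) * (f s - f t))
        = fun s => Real.exp (-(γ * (t - s))) * f s - Real.exp (-(γ * (t - s))) * f t := by
      funext s; ring
    rw [this, intervalIntegral.integral_sub hi1 hi2, intervalIntegral.integral_mul_const]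
    ring
  -- |J| ≤ ∫ E * |f s - f t|
  have hJbound : |∫ s in (0:ℝ)..t, Real.exp (-(γ * (t - s))) * (f s - f t)|
      ≤ ∫ s in (0:ℝ)..t, Real.exp (-(γ * (t - s))) * |f s - f t| := by
    have := intervalIntegral.norm_integral_le_integral_norm
      (μ := volume) (f := fun s => Real.exp (-(γ * (t - s))) * (f s - f t)) ht0.le
    simp only [Real.norm_eq_abs] at this
    calc |∫ s in (0:ℝ)..t, Real.exp (-(γ * (t - s))) * (f s - f t)|
        ≤ ∫ s in (0:ℝ)..t, |Real.exp (-(γ * (t - s))) * (f s - f t)| := this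
      _ = ∫ s in (0:ℝ)..t, Real.exp (-(γ * (t - s))) * |f s - f t| := by
          congr 1; funext s
          rw [abs_mul, abs_of_pos (hEpos s)]
  -- split and bound the pieces
  have hsplit : (∫ s in (0:ℝ)..t, Real.exp (-(γ * (t - s))) * |f s - f t|)
      = (∫ s in (0:ℝ)..a, Real.exp (-(γ * (t - s))) * |f s - f t|)
        + ∫ s in a..t, Real.exp (-(γ * (t - s))) * |f s - f t| :=
    (intervalIntegral.integral_add_adjacent_intervals hi3a hi3b).symm
  have hA : (∫ s in (0:ℝ)..a, Real.exp (-(γ * (t - s))) * |f s - f t|)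
      ≤ 2 * M * ((Real.exp (-(γ * (t - a))) - Real.exp (-(γ * (t - 0)))) / γ) := by
    have hmono : (∫ s in (0:ℝ)..a, Real.exp (-(γ * (t - s))) * |f s - f t|)
        ≤ ∫ s in (0:ℝ)..a, Real.exp (-(γ * (t - s))) * (2 * M) := by
      apply intervalIntegral.integral_mono_on ha0 hi3a
      · exact Continuous.intervalIntegrable (hEc.mul continuous_const) 0 a
      · intro s hs
        have hs1 : s ∈ Set.Icc (0:ℝ) T := ⟨hs.1, le_trans hs.2 (le_trans hat htT)⟩
        have hb1 := hM' s hs1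
        have hb2 := hM' t ⟨ht0.le, htT⟩
        have : |f s - f t| ≤ 2 * M := by
          calc |f s - f t| ≤ |f s| + |f t| := abs_sub _ _
            _ ≤ 2 * M := by linarith
        exact mul_le_mul_of_nonneg_left this (hEpos s).le
    calc (∫ s in (0:ℝ)..a, Real.exp (-(γ * (t - s))) * |f s - f t|)
        ≤ ∫ s in (0:ℝ)..a, Real.exp (-(γ * (t - s))) * (2 * M) := hmono
      _ = 2 * M * ∫ s in (0:ℝ)..a, Real.exp (-(γ * (t - s))) := by
          rw [intervalIntegral.integral_mul_const]; ring
      _ = 2 * M * ((Real.exp (-(γ * (t - a))) - Real.exp (-(γ * (t - 0)))) / γ) := by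
          rw [exp_int γ t 0 a hγne]
  have hB : (∫ s in a..t, Real.exp (-(γ * (t - s))) * |f s - f t|)
      ≤ (ε/4) * ((Real.exp (-(γ * (t - t))) - Real.exp (-(γ * (t - a)))) / γ) := by
    have hmono : (∫ s in a..t, Real.exp (-(γ * (t - s))) * |f s - f t|)
        ≤ ∫ s in a..t, Real.exp (-(γ * (t - s))) * (ε/4) := by
      apply intervalIntegral.integral_mono_on hat hi3b
      · exact Continuous.intervalIntegrable (hEc.mul continuous_const) a t
      · intro s hs
        have hs1 : s ∈ Set.Icc (0:ℝ) T := ⟨le_trans ha0 hs.1, le_trans hs.2 htT⟩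
        have hst : dist s t < η := by
          rw [Real.dist_eq, abs_of_nonpos (by linarith [hs.2] : s - t ≤ 0)]
          have : t - s ≤ η' := by
            have := hs.1
            simp only [ha_def] at this
            linarith
          linarith
        have := hηε s hs1 t ⟨ht0.le, htT⟩ hst
        rw [Real.dist_eq] at this
        exact mul_le_mul_of_nonneg_left this.le (hEpos s).le
    calc (∫ s in a..t, Real.exp (-(γ * (t - s))) * |f s - f t|)
        ≤ ∫ s in a..t, Real.exp (-(γ * (t - s))) * (ε/4) := hmono
      _ = (ε/4) * ∫ s in a..t, Real.exp (-(γ * (t - s))) := by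
          rw [intervalIntegral.integral_mul_const]; ring
      _ = (ε/4) * ((Real.exp (-(γ * (t - t))) - Real.exp (-(γ * (t - a)))) / γ) := by
          rw [exp_int γ t a t hγne]
  -- assemble
  rw [Real.dist_eq]
  have hkey : f t - γ * ∫ s in (0:ℝ)..t, Real.exp (-(γ * (t - s))) * f s
      = f t * Real.exp (-(γ * t))
        - γ * ∫ s in (0:ℝ)..t, Real.exp (-(γ * (t - s))) * (f s - f t) := by
    rw [hJ]
    have : γ * (f t * ∫ s in (0:ℝ)..t, Real.exp (-(γ * (t - s))))
        = f t * (γ * ∫ s in (0:ℝ)..t, Real.exp (-(γ * (t - s)))) := by ring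
    rw [mul_sub, this, hC]
    ring
  rw [hkey]
  have hbig : |f t * Real.exp (-(γ * t))
      - γ * ∫ s in (0:ℝ)..t, Real.exp (-(γ * (t - s))) * (f s - f t)|
      ≤ |f t| * Real.exp (-(γ * t))
        + γ * ∫ s in (0:ℝ)..t, Real.exp (-(γ * (t - s))) * |f s - f t| := by
    calc |f t * Real.exp (-(γ * t))
        - γ * ∫ s in (0:ℝ)..t, Real.exp (-(γ * (t - s))) * (f s - f t)|
        ≤ |f t * Real.exp (-(γ * t))|
          + |γ * ∫ s in (0:ℝ)..t, Real.exp (-(γ * (t - s))) * (f s - f t)| := abs_sub _ _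
      _ ≤ |f t| * Real.exp (-(γ * t))
          + γ * ∫ s in (0:ℝ)..t, Real.exp (-(γ * (t - s))) * |f s - f t| := by
          gcongr ?_ + ?_
          · rw [abs_mul, abs_of_pos (Real.exp_pos _)]
          · rw [abs_mul, abs_of_pos hγpos]
            exact mul_le_mul_of_nonneg_left hJbound hγpos.le
  -- final numeric estimate
  have hexp_t_δ : Real.exp (-(γ * t)) ≤ Real.exp (-(γ * δ)) := by
    apply Real.exp_le_exp.mpr
    have := mul_le_mul_of_nonneg_left hδt hγpos.le
    linarith
  have hft : |f t| ≤ M := hM' t ⟨ht0.le, htT⟩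
  have hEta : Real.exp (-(γ * (t - a))) = Real.exp (-(γ * η')) := by
    simp [ha_def]
  have hApos := hA
  have hBpos := hB
  rw [hEta] at hApos hBpos
  have hexp_tt : Real.exp (-(γ * (t - t))) = 1 := by simp
  rw [hexp_tt] at hBpos
  have hval : γ * ∫ s in (0:ℝ)..t, Real.exp (-(γ * (t - s))) * |f s - f t|
      ≤ 2 * M * Real.exp (-(γ * η')) + ε/4 := by
    rw [hsplit]
    have e1 : (0:ℝ) < Real.exp (-(γ * (t - 0))) := Real.exp_pos _
    have e2 : Real.exp (-(γ * η')) ≤ 1 := Real.exp_le_one_iff.mpr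
      (by have := mul_pos hγpos hη'pos; linarith)
    have e3 : (0:ℝ) < Real.exp (-(γ * η')) := Real.exp_pos _
    have hεpos : (0:ℝ) < ε := hε
    rw [mul_add]
    have hAq : γ * (∫ s in (0:ℝ)..a, Real.exp (-(γ * (t - s))) * |f s - f t|)
        ≤ 2 * M * Real.exp (-(γ * η')) := by
      calc γ * (∫ s in (0:ℝ)..a, Real.exp (-(γ * (t - s))) * |f s - f t|)
          ≤ γ * (2 * M * ((Real.exp (-(γ * η')) - Real.exp (-(γ * (t - 0)))) / γ)) := by
            exact mul_le_mul_of_nonneg_left hApos hγpos.le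
        _ = 2 * M * (Real.exp (-(γ * η')) - Real.exp (-(γ * (t - 0)))) := by
            field_simp
        _ ≤ 2 * M * Real.exp (-(γ * η')) := by nlinarith [mul_nonneg hM0 e1.le]
    have hBq : γ * (∫ s in a..t, Real.exp (-(γ * (t - s))) * |f s - f t|)
        ≤ ε/4 := by
      calc γ * (∫ s in a..t, Real.exp (-(γ * (t - s))) * |f s - f t|)
          ≤ γ * ((ε/4) * ((1 - Real.exp (-(γ * η'))) / γ)) := by
            exact mul_le_mul_of_nonneg_left hBpos hγpos.le
        _ = (ε/4) * (1 - Real.exp (-(γ * η'))) := by field_simp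
        _ ≤ ε/4 := by nlinarith [mul_nonneg hεpos.le e3.le]
    linarith
  have hft_term : |f t| * Real.exp (-(γ * t)) ≤ M * Real.exp (-(γ * δ)) := by
    have := Real.exp_pos (-(γ * t))
    calc |f t| * Real.exp (-(γ * t)) ≤ M * Real.exp (-(γ * t)) := by
          exact mul_le_mul_of_nonneg_right hft this.le
      _ ≤ M * Real.exp (-(γ * δ)) := by
          exact mul_le_mul_of_nonneg_left hexp_t_δ hM0
  calc |f t * Real.exp (-(γ * t))
      - γ * ∫ s in (0:ℝ)..t, Real.exp (-(γ * (t - s))) * (f s - f t)|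
      ≤ |f t| * Real.exp (-(γ * t))
        + γ * ∫ s in (0:ℝ)..t, Real.exp (-(γ * (t - s))) * |f s - f t| := hbig
    _ ≤ M * Real.exp (-(γ * δ)) + (2 * M * Real.exp (-(γ * η')) + ε/4) := by
        linarith
    _ < ε := by linarith
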